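/- Let ℓ ≥ 1, let U := [I_ℓ; I_ℓ] ∈ ℝ^{2ℓ×ℓ}, let M ∈ ℝ^{ℓ×ℓ} be the diagonal matrix whose first ℓ−1 diagonal entries are 4 and whose last diagonal entry is 3, and let D ∈ ℝ^{ℓ×ℓ} be the diagonal matrix whose first ℓ−1 diagonal entries are 1 and whose last diagonal entry is 1/2. Then the set {Y : Y real symmetric positive semidefinite 2ℓ×2ℓ matrix with UᵀYU = M, Y_{1:ℓ,1:ℓ} = I_ℓ, Y_{ℓ+1:2ℓ,ℓ+1:2ℓ} = I_ℓ} consists of exactly one element, namely the 2×2 block matrix [[I_ℓ, D],[D, I_ℓ]], and this matrix has rank ℓ+1. -/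

import Mathlib

open Matrix

noncomputable section
open Matrix

noncomputable section

/-- Feasibility predicate: `Y` is a symmetric PSD `2ℓ×2ℓ` real matrix with `UᵀYU = M` and both
`ℓ×ℓ` diagonal blocks equal to the identity. -/
def phiFeas (l : ℕ) (U : Matrix (Fin (2*l)) (Fin l) ℝ)
    (M : Matrix (Fin l) (Fin l) ℝ)
    (Y : Matrix (Fin (2*l)) (Fin (2*l)) ℝ) : Prop :=
  Y.PosSemidef ∧ Uᵀ * Y * U = M ∧
  (∀ i j : Fin l, Y ⟨(i : ℕ), by omega⟩ ⟨(j : ℕ), by omega⟩ = if i = j then (1:ℝ) else 0) ∧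
  (∀ i j : Fin l, Y ⟨l + (i : ℕ), by omega⟩ ⟨l + (j : ℕ), by omega⟩ = if i = j then (1:ℝ) else 0)

/-- The `2ℓ×ℓ` block matrix `U = [I_ℓ; I_ℓ]`. -/
def UmatII (l : ℕ) : Matrix (Fin (2*l)) (Fin l) ℝ :=
  Matrix.of fun i j => if (i : ℕ) = (j : ℕ) ∨ (i : ℕ) = l + (j : ℕ) then 1 else 0

/-- The diagonal matrix `M = diag(4, …, 4, 3)`. -/
def Mdiag (l : ℕ) : Matrix (Fin l) (Fin l) ℝ :=
  Matrix.of fun i j => if i = j then (if (i : ℕ) = l - 1 then 3 else 4) else 0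

/-- The diagonal matrix `D = diag(1, …, 1, 1/2)`. -/
def Ddiag (l : ℕ) : Matrix (Fin l) (Fin l) ℝ :=
  Matrix.of fun i j => if i = j then (if (i : ℕ) = l - 1 then 1/2 else 1) else 0

/-- The `2ℓ×2ℓ` block matrix `[[I_ℓ, D], [D, I_ℓ]]`. -/
def blockIDDI (l : ℕ) (D : Matrix (Fin l) (Fin l) ℝ) :
    Matrix (Fin (2*l)) (Fin (2*l)) ℝ :=
  Matrix.of fun i j =>
    if h1 : (i : ℕ) < l then
      if h2 : (j : ℕ) < l then (if i = j then 1 else 0)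
      else D ⟨(i : ℕ), h1⟩ ⟨(j : ℕ) - l, by omega⟩
    else
      if h2 : (j : ℕ) < l then D ⟨(i : ℕ) - l, by omega⟩ ⟨(j : ℕ), h2⟩
      else (if (i : ℕ) = (j : ℕ) then 1 else 0)


namespace PhiAux

/-- Index equivalence `Fin (2l) ≃ Fin l ⊕ Fin l`. -/
def esum (l : ℕ) : Fin (2*l) ≃ (Fin l ⊕ Fin l) where
  toFun i := if h : (i : ℕ) < l then Sum.inl ⟨i, h⟩ else Sum.inr ⟨(i:ℕ) - l, by omega⟩
  invFun x := match x with
    | Sum.inl j => ⟨(j:ℕ), by omega⟩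
    | Sum.inr j => ⟨l + (j:ℕ), by omega⟩
  left_inv i := by
    by_cases h : (i:ℕ) < l
    · simp [h]
    · simp only [h, dite_false, Sum.elim_inr]
      apply Fin.ext; simp; omega
  right_inv x := by
    rcases x with j | j
    · simp [j.isLt]
    · have h : ¬ (l + (j:ℕ) < l) := by omega
      simp [h]

def dvec (l : ℕ) : Fin l → ℝ := fun i => if (i:ℕ) = l - 1 then 1/2 else 1
def svec (l : ℕ) : Fin l → ℝ := fun i => if (i:ℕ) = l - 1 then 3/4 else 0

lemma hs1 (l : ℕ) (i : Fin l) :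
    (esum l).symm (Sum.inl i) = (⟨(i:ℕ), by omega⟩ : Fin (2*l)) := rfl
lemma hs2 (l : ℕ) (i : Fin l) :
    (esum l).symm (Sum.inr i) = (⟨l + (i:ℕ), by omega⟩ : Fin (2*l)) := rfl
lemma he1 (l : ℕ) (i : Fin l) (pf : (i:ℕ) < 2*l) :
    esum l ⟨(i:ℕ), pf⟩ = Sum.inl i := by
  simp [esum, i.isLt]
lemma he2 (l : ℕ) (i : Fin l) (pf : l + (i:ℕ) < 2*l) :
    esum l ⟨l + (i:ℕ), pf⟩ = Sum.inr i := by
  have h : ¬ (l + (i:ℕ) < l) := by omega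
  simp only [esum, Equiv.coe_fn_mk]
  rw [dif_neg h]
  congr 1
  apply Fin.ext
  simp

end PhiAux
namespace PhiAux

lemma Ddiag_eq (l : ℕ) : Ddiag l = diagonal (dvec l) := by
  ext i j
  by_cases h : i = j <;> simp [Ddiag, dvec, diagonal, h]

lemma Mdiag_eq (l : ℕ) :
    Mdiag l = diagonal (fun i : Fin l => if (i:ℕ) = l - 1 then (3:ℝ) else 4) := by
  ext i j
  by_cases h : i = j <;> simp [Mdiag, diagonal, h]

lemma blockIDDI_eq (l : ℕ) :
    blockIDDI l (Ddiag l)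
      = (fromBlocks (1 : Matrix (Fin l) (Fin l) ℝ) (Ddiag l) (Ddiag l) 1).submatrix
          (esum l) (esum l) := by
  ext i j
  simp only [blockIDDI, submatrix_apply, esum, Equiv.coe_fn_mk, of_apply]
  by_cases h1 : (i:ℕ) < l <;> by_cases h2 : (j:ℕ) < l
  · simp [h1, h2, fromBlocks, one_apply, Fin.ext_iff]
  · simp [h1, h2, fromBlocks]
  · simp [h1, h2, fromBlocks]
  · have hiff : ((i:ℕ) - l = (j:ℕ) - l) ↔ ((i:ℕ) = (j:ℕ)) := by
      have := i.isLt; have := j.isLt; omega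
    simp [h1, h2, fromBlocks, one_apply, Fin.ext_iff, hiff]

lemma UmatII_eq (l : ℕ) :
    UmatII l = (fromRows (1 : Matrix (Fin l) (Fin l) ℝ) 1).submatrix (esum l) id := by
  ext i j
  simp only [UmatII, of_apply, submatrix_apply, esum, Equiv.coe_fn_mk, id_eq]
  by_cases h : (i:ℕ) < l
  · have hiff : ((i:ℕ) = (j:ℕ) ∨ (i:ℕ) = l + (j:ℕ)) ↔ ((i:ℕ) = (j:ℕ)) := by
      have := j.isLt; omega
    simp [h, Matrix.fromRows_apply_inl, Matrix.fromRows_apply_inr, one_apply, Fin.ext_iff, hiff]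
  · have hiff : ((i:ℕ) = (j:ℕ) ∨ (i:ℕ) = l + (j:ℕ)) ↔ ((i:ℕ) - l = (j:ℕ)) := by
      have := j.isLt; have := i.isLt; omega
    simp [h, Matrix.fromRows_apply_inl, Matrix.fromRows_apply_inr, one_apply, Fin.ext_iff, hiff]

/-- Lower-triangular factor. -/
def Lmat (l : ℕ) : Matrix (Fin l ⊕ Fin l) (Fin l ⊕ Fin l) ℝ := fromBlocks 1 0 (Ddiag l) 1

lemma hfac (l : ℕ) :
    fromBlocks (1 : Matrix (Fin l) (Fin l) ℝ) (Ddiag l) (Ddiag l) 1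
      = Lmat l * diagonal (Sum.elim (fun _ : Fin l => (1:ℝ)) (svec l)) * (Lmat l)ᵀ := by
  have h1 : fromBlocks (1 : Matrix (Fin l) (Fin l) ℝ) (Ddiag l) (Ddiag l) 1
      = Lmat l * fromBlocks 1 0 0 (1 - Ddiag l * Ddiag l) * fromBlocks 1 (Ddiag l) 0 1 := by
    letI : Invertible (1 : Matrix (Fin l) (Fin l) ℝ) := invertibleOne
    have h := fromBlocks_eq_of_invertible₁₁ (1 : Matrix (Fin l) (Fin l) ℝ) (Ddiag l) (Ddiag l)
      (1 : Matrix (Fin l) (Fin l) ℝ)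
    simpa [Lmat, Matrix.mul_one, Matrix.one_mul] using h
  have h2 : (1 : Matrix (Fin l) (Fin l) ℝ) - Ddiag l * Ddiag l = diagonal (svec l) := by
    rw [Ddiag_eq, diagonal_mul_diagonal, ← diagonal_one, diagonal_sub]
    refine congrArg Matrix.diagonal ?_
    funext i
    simp only [Pi.sub_apply, Pi.mul_apply, Pi.one_apply, dvec, svec]
    split <;> norm_num
  have h3 : fromBlocks (1 : Matrix (Fin l) (Fin l) ℝ) 0 0 (1 - Ddiag l * Ddiag l)
      = diagonal (Sum.elim (fun _ : Fin l => (1:ℝ)) (svec l)) := by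
    rw [h2, ← diagonal_one]
    rw [fromBlocks_diagonal]
  have h4 : fromBlocks (1 : Matrix (Fin l) (Fin l) ℝ) (Ddiag l) 0 1 = (Lmat l)ᵀ := by
    rw [Lmat, fromBlocks_transpose]
    rw [Ddiag_eq]
    simp
  rw [h1, h3, h4]

lemma mid_psd (l : ℕ) : (diagonal (Sum.elim (fun _ : Fin l => (1:ℝ)) (svec l))).PosSemidef := by
  refine posSemidef_diagonal_iff.mpr ?_
  rintro (a | a)
  · simp
  · simp only [Sum.elim_inr, svec]
    split <;> norm_num

lemma block_psd (l : ℕ) :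
    (fromBlocks (1 : Matrix (Fin l) (Fin l) ℝ) (Ddiag l) (Ddiag l) 1).PosSemidef := by
  rw [hfac]
  have h := (mid_psd l).mul_mul_conjTranspose_same (Lmat l)
  have hct : (Lmat l)ᴴ = (Lmat l)ᵀ := by
    ext i j; simp [conjTranspose_apply]
  rwa [hct] at h

lemma detL (l : ℕ) : IsUnit (Lmat l).det := by
  rw [Lmat, det_fromBlocks_zero₁₂]
  simp

lemma rank_mid (l : ℕ) (hl : 1 ≤ l) :
    (diagonal (Sum.elim (fun _ : Fin l => (1:ℝ)) (svec l))).rank = l + 1 := by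
  rw [rank_diagonal]
  have hsv : ∀ b : Fin l, svec l b ≠ 0 ↔ (b:ℕ) = l - 1 := by
    intro b
    simp only [svec]
    split <;> simp_all
  have e : {x : Fin l ⊕ Fin l // Sum.elim (fun _ : Fin l => (1:ℝ)) (svec l) x ≠ 0} ≃ (Fin l ⊕ Unit) :=
    { toFun := fun x => match x with
        | ⟨Sum.inl a, _⟩ => Sum.inl a
        | ⟨Sum.inr _, _⟩ => Sum.inr ()
      invFun := fun y => match y with
        | Sum.inl a => ⟨Sum.inl a, by simp⟩
        | Sum.inr _ => ⟨Sum.inr ⟨l-1, by omega⟩, by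
            simp only [Sum.elim_inr]
            rw [hsv]⟩
      left_inv := fun x => by
        obtain ⟨(a | b), hx⟩ := x
        · rfl
        · simp only [Sum.elim_inr] at hx
          have hb : (b:ℕ) = l - 1 := (hsv b).mp hx
          apply Subtype.ext
          simp only []
          congr 1
          exact Fin.ext (by simpa using hb.symm)
      right_inv := fun y => by rcases y with a | ⟨⟩ <;> rfl }
  rw [Fintype.card_congr e]
  simp

lemma rank_block (l : ℕ) (hl : 1 ≤ l) :
    (fromBlocks (1 : Matrix (Fin l) (Fin l) ℝ) (Ddiag l) (Ddiag l) 1).rank = l + 1 := by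
  rw [hfac, rank_mul_eq_left_of_isUnit_det _ _ (by rw [det_transpose]; exact detL l),
    rank_mul_eq_right_of_isUnit_det _ _ (detL l)]
  exact rank_mid l hl

end PhiAux
namespace PhiAux

lemma key (l : ℕ) (A : Matrix (Fin l ⊕ Fin l) (Fin l ⊕ Fin l) ℝ) :
    (UmatII l)ᵀ * (A.submatrix (esum l) (esum l)) * UmatII l
      = A.toBlocks₁₁ + A.toBlocks₁₂ + A.toBlocks₂₁ + A.toBlocks₂₂ := by
  rw [UmatII_eq, transpose_submatrix]
  rw [submatrix_mul_equiv, submatrix_mul_equiv, submatrix_id_id]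
  conv_lhs => rw [← fromBlocks_toBlocks A]
  rw [Matrix.mul_assoc, fromBlocks_mul_fromRows, transpose_fromRows, transpose_one,
    fromCols_mul_fromRows]
  simp only [Matrix.mul_one, Matrix.one_mul]
  abel

lemma forward (l : ℕ) (hl : 1 ≤ l) :
    phiFeas l (UmatII l) (Mdiag l) (blockIDDI l (Ddiag l)) := by
  refine ⟨?_, ?_, ?_, ?_⟩
  · rw [blockIDDI_eq]; exact (block_psd l).submatrix _
  · rw [blockIDDI_eq, key]
    simp only [toBlocks_fromBlocks₁₁, toBlocks_fromBlocks₁₂, toBlocks_fromBlocks₂₁,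
      toBlocks_fromBlocks₂₂]
    rw [Mdiag_eq, Ddiag_eq]
    ext i j
    by_cases h : i = j
    · subst h
      simp only [Matrix.add_apply, one_apply_eq, diagonal_apply_eq, dvec]
      split <;> norm_num
    · simp [Matrix.add_apply, one_apply_ne h, diagonal_apply_ne _ h, h]
  · intro i j
    rw [blockIDDI_eq]
    rw [show ((⟨(i:ℕ), by omega⟩ : Fin (2*l))) = (⟨(i:ℕ), by omega⟩ : Fin (2*l)) from rfl]
    simp only [submatrix_apply]
    rw [he1 l i, he1 l j]
    simp [one_apply]
  · intro i j
    rw [blockIDDI_eq]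
    simp only [submatrix_apply]
    rw [he2 l i, he2 l j]
    simp [one_apply]

lemma Ddiag_symm (l : ℕ) (a b : Fin l) : Ddiag l a b = Ddiag l b a := by
  by_cases h : a = b
  · subst h; rfl
  · simp [Ddiag_eq, diagonal_apply_ne _ h, diagonal_apply_ne _ (Ne.symm h)]

lemma backward (l : ℕ) (hl : 1 ≤ l) (Y : Matrix (Fin (2*l)) (Fin (2*l)) ℝ)
    (h : phiFeas l (UmatII l) (Mdiag l) Y) : Y = blockIDDI l (Ddiag l) := by
  obtain ⟨hPSD, hC, h11, h22⟩ := h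
  set Y' := Y.submatrix (esum l).symm (esum l).symm with hY'
  have hYsub : Y = Y'.submatrix (esum l) (esum l) := by
    ext i j
    simp [hY', Equiv.symm_apply_apply]
  have hb11 : ∀ i j : Fin l, Y' (Sum.inl i) (Sum.inl j) = if i = j then (1:ℝ) else 0 := by
    intro i j
    rw [hY', submatrix_apply, hs1, hs1]
    exact h11 i j
  have hb22 : ∀ i j : Fin l, Y' (Sum.inr i) (Sum.inr j) = if i = j then (1:ℝ) else 0 := by
    intro i j
    rw [hY', submatrix_apply, hs2, hs2]
    exact h22 i j
  have hPSD' : Y'.PosSemidef := hPSD.submatrix _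
  have hsym : ∀ s t, Y' s t = Y' t s := by
    intro s t
    have := hPSD'.1.apply s t
    simpa using this.symm
  have hsum : ∀ a b : Fin l,
      Y' (Sum.inl a) (Sum.inl b) + Y' (Sum.inl a) (Sum.inr b)
        + Y' (Sum.inr a) (Sum.inl b) + Y' (Sum.inr a) (Sum.inr b) = Mdiag l a b := by
    intro a b
    have h0 : (UmatII l)ᵀ * (Y'.submatrix (esum l) (esum l)) * UmatII l = Mdiag l := by
      rw [← hYsub]; exact hC
    rw [key] at h0
    have h1 := congrFun (congrFun h0 a) b
    simpa [toBlocks₁₁, toBlocks₁₂, toBlocks₂₁, toBlocks₂₂, Matrix.add_apply] using h1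
  have hdiag : ∀ a : Fin l, Y' (Sum.inl a) (Sum.inr a) = dvec l a := by
    intro a
    have h0 := hsum a a
    rw [hb11, hb22, if_pos rfl, hsym (Sum.inr a) (Sum.inl a)] at h0
    have h2 : Mdiag l a a = if (a:ℕ) = l - 1 then 3 else 4 := by simp [Mdiag]
    rw [h2] at h0
    by_cases hc : (a:ℕ) = l - 1 <;> simp only [dvec, hc, if_pos, if_neg, if_true, if_false] <;>
      simp [hc] at h0 <;> linarith
  have hcol : ∀ i : Fin l, (i:ℕ) ≠ l - 1 → ∀ s, Y' s (Sum.inl i) = Y' s (Sum.inr i) := by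
    intro i hi s
    have e1 : Y' (Sum.inl i) (Sum.inl i) = 1 := by rw [hb11]; simp
    have e2 : Y' (Sum.inr i) (Sum.inr i) = 1 := by rw [hb22]; simp
    have e3 : Y' (Sum.inl i) (Sum.inr i) = 1 := by rw [hdiag]; simp [dvec, hi]
    have e4 : Y' (Sum.inr i) (Sum.inl i) = 1 := by rw [hsym]; exact e3
    have hmv : Y' *ᵥ ((Pi.single (Sum.inl i) 1 - Pi.single (Sum.inr i) 1 :
          (Fin l ⊕ Fin l) → ℝ))
        = fun t => Y' t (Sum.inl i) - Y' t (Sum.inr i) := by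
      funext t
      simp [mulVec_sub, mulVec_single]
    have hq : star ((Pi.single (Sum.inl i) 1 - Pi.single (Sum.inr i) 1 :
          (Fin l ⊕ Fin l) → ℝ))
        ⬝ᵥ (Y' *ᵥ ((Pi.single (Sum.inl i) 1 - Pi.single (Sum.inr i) 1 :
          (Fin l ⊕ Fin l) → ℝ))) = 0 := by
      have hstar : star ((Pi.single (Sum.inl i) 1 - Pi.single (Sum.inr i) 1 :
          (Fin l ⊕ Fin l) → ℝ))
          = (Pi.single (Sum.inl i) 1 - Pi.single (Sum.inr i) 1 :
          (Fin l ⊕ Fin l) → ℝ) := by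
        funext t; simp
      rw [hstar, hmv, sub_dotProduct, single_dotProduct, single_dotProduct]
      simp only [one_mul]
      rw [e1, e2, e3, e4]
      ring
    have hker := (hPSD'.dotProduct_mulVec_zero_iff _).mp hq
    have h5 := congrFun hker s
    rw [hmv] at h5
    simpa using sub_eq_zero.mp h5
  have hcross : ∀ a b : Fin l, Y' (Sum.inl a) (Sum.inr b) = Ddiag l a b := by
    intro a b
    by_cases hab : a = b
    · subst hab
      rw [hdiag]
      simp [Ddiag_eq, dvec]
    · have hDab : Ddiag l a b = 0 := by simp [Ddiag_eq, diagonal_apply_ne _ hab]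
      rw [hDab]
      by_cases hb : (b:ℕ) = l - 1
      · have ha : (a:ℕ) ≠ l - 1 := fun hc => hab (Fin.ext (by omega))
        calc Y' (Sum.inl a) (Sum.inr b) = Y' (Sum.inr b) (Sum.inl a) := hsym _ _
          _ = Y' (Sum.inr b) (Sum.inr a) := hcol a ha _
          _ = 0 := by rw [hb22]; simp [Ne.symm hab]
      · rw [← hcol b hb (Sum.inl a), hb11]
        simp [hab]
  have hmain : Y' = fromBlocks 1 (Ddiag l) (Ddiag l) 1 := by
    ext s t
    rcases s with a | a <;> rcases t with b | b
    · rw [hb11]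
      simp [one_apply]
    · rw [hcross]
      simp
    · rw [hsym, hcross, Ddiag_symm l b a]
      simp
    · rw [hb22]
      simp [one_apply]
  rw [hYsub, blockIDDI_eq, hmain]

end PhiAux

/-- With `U = [I_ℓ; I_ℓ]` and `M = diag(4,…,4,3)`, the feasible set consists of exactly one
element, namely `[[I_ℓ, D], [D, I_ℓ]]` with `D = diag(1,…,1,1/2)`, and this matrix has rank
`ℓ+1`. -/
theorem phiFeas_unique_element (l : ℕ) (hl : 1 ≤ l) :
    (∀ Y : Matrix (Fin (2*l)) (Fin (2*l)) ℝ,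
        phiFeas l (UmatII l) (Mdiag l) Y ↔ Y = blockIDDI l (Ddiag l)) ∧
    (blockIDDI l (Ddiag l)).rank = l + 1 := by
  constructor
  · intro Y
    constructor
    · exact PhiAux.backward l hl Y
    · rintro rfl
      exact PhiAux.forward l hl
  · rw [PhiAux.blockIDDI_eq, rank_submatrix]
    exact PhiAux.rank_block l hl
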